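/- arXiv:1108.2286 — 3 statements merged into one kernel-verified Lean document; each statement's English description precedes it below -/
import Mathlib

section
/- Let φ be a holomorphic automorphism of the unit disk 𝔻 with 1 - (1/2)^n ≤ |φ(0)| < 1 - (1/2)^(n+1). Then |φ'(ζ)| ≥ (1/2)^(n+3) for all ζ ∈ 𝔻, and consequently the image φ(𝔻_{(1/2)^k}) contains the disk of radius (1/2)^(n+k+3) centered at φ(0), for every k ∈ ℕ. -/
/-- If `φ` is a holomorphic automorphism of the unit disc with
`1 - (1/2)^n ≤ |φ(0)| < 1 - (1/2)^(n+1)`, then `|φ'(ζ)| ≥ (1/2)^(n+3)` on `𝔻`, and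
consequently `φ(𝔻_{(1/2)^k})` contains the disc of radius `(1/2)^(n+k+3)` about `φ(0)`. -/
theorem stmt_1 (a : ℂ) (ha : ‖a‖ < 1) (β : ℝ) (n : ℕ) (φ : ℂ → ℂ)
    (hφ : ∀ ζ : ℂ, φ ζ = Complex.exp (β * Complex.I) * ((ζ - a) / (1 - (starRingEnd ℂ) a * ζ)))
    (h1 : 1 - (1 / 2 : ℝ) ^ n ≤ ‖φ 0‖)
    (h2 : ‖φ 0‖ < 1 - (1 / 2 : ℝ) ^ (n + 1)) :
    (∀ ζ : ℂ, ‖ζ‖ < 1 → (1 / 2 : ℝ) ^ (n + 3) ≤ ‖deriv φ ζ‖) ∧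
      ∀ k : ℕ, Metric.ball (φ 0) ((1 / 2 : ℝ) ^ (n + k + 3)) ⊆
        φ '' Metric.ball 0 ((1 / 2 : ℝ) ^ k) := by
  set c : ℂ := Complex.exp (↑β * Complex.I) with hc_def
  have hc1 : ‖c‖ = 1 := by
    rw [hc_def, Complex.norm_exp]
    simp
  have hc0 : c ≠ 0 := Complex.exp_ne_zero _
  have hφ0 : φ 0 = -(c * a) := by
    rw [hφ]; simp
  have habs0 : ‖φ 0‖ = ‖a‖ := by
    rw [hφ0, norm_neg, norm_mul, hc1, one_mul]
  have hA : ‖a‖ < 1 - (1/2:ℝ)^(n+1) := habs0 ▸ h2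
  have hgap : (1/2:ℝ)^(n+1) < 1 - ‖a‖ := by linarith
  have hsq_pos : (1/2:ℝ)^(n+1) < 1 - Complex.normSq a := by
    rw [Complex.normSq_eq_norm_sq]
    nlinarith [norm_nonneg a]
  have hpos1 : (0:ℝ) < 1 - Complex.normSq a := by
    have : (0:ℝ) < (1/2:ℝ)^(n+1) := by positivity
    linarith
  have h1acomplex : (1:ℂ) - (starRingEnd ℂ) a * a = ((1 - Complex.normSq a : ℝ) : ℂ) := by
    rw [mul_comm, Complex.mul_conj]
    push_cast
    ring
  have h1a_ne : (1:ℂ) - (starRingEnd ℂ) a * a ≠ 0 := by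
    rw [h1acomplex]
    exact_mod_cast ne_of_gt hpos1
  constructor
  · -- derivative bound
    intro ζ hζ
    have hlt : ‖(starRingEnd ℂ) a * ζ‖ < 1 := by
      rw [norm_mul, Complex.norm_conj]
      nlinarith [norm_nonneg ζ, norm_nonneg a]
    have hden_ne : (1:ℂ) - (starRingEnd ℂ) a * ζ ≠ 0 := by
      intro h
      have h' : (1:ℂ) = (starRingEnd ℂ) a * ζ := by linear_combination h
      rw [← h'] at hlt
      simp at hlt
    have hφeq : φ = fun z => c * ((z - a) / (1 - (starRingEnd ℂ) a * z)) := funext hφ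
    have hquot : HasDerivAt (fun z => (z - a) / (1 - (starRingEnd ℂ) a * z))
        ((1 * (1 - (starRingEnd ℂ) a * ζ) - (ζ - a) * (-(starRingEnd ℂ) a)) /
          (1 - (starRingEnd ℂ) a * ζ)^2) ζ := by
      have hu : HasDerivAt (fun z : ℂ => z - a) 1 ζ := (hasDerivAt_id ζ).sub_const a
      have hv : HasDerivAt (fun z : ℂ => 1 - (starRingEnd ℂ) a * z) (-(starRingEnd ℂ) a) ζ := by
        simpa using ((hasDerivAt_id ζ).const_mul ((starRingEnd ℂ) a)).const_sub 1
      exact hu.div hv hden_ne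
    have hd : HasDerivAt φ
        (c * ((1 - (starRingEnd ℂ) a * a) / (1 - (starRingEnd ℂ) a * ζ)^2)) ζ := by
      rw [hφeq]
      have key : c * ((1 - (starRingEnd ℂ) a * a) / (1 - (starRingEnd ℂ) a * ζ)^2) =
          c * ((1 * (1 - (starRingEnd ℂ) a * ζ) - (ζ - a) * (-(starRingEnd ℂ) a)) /
            (1 - (starRingEnd ℂ) a * ζ)^2) := by ring
      rw [key]
      exact hquot.const_mul c
    rw [hd.deriv, norm_mul, hc1, one_mul, norm_div, h1acomplex, Complex.norm_real,
      Real.norm_of_nonneg hpos1.le, norm_pow]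
    have habs2 : ‖1 - (starRingEnd ℂ) a * ζ‖ < 2 := by
      have h := norm_sub_le (1:ℂ) ((starRingEnd ℂ) a * ζ)
      rw [norm_one] at h
      linarith
    have hdpos : 0 < ‖1 - (starRingEnd ℂ) a * ζ‖ := norm_pos_iff.mpr hden_ne
    have h4 : (‖1 - (starRingEnd ℂ) a * ζ‖)^2 ≤ 4 := by nlinarith
    have hpow2 : 0 < (‖1 - (starRingEnd ℂ) a * ζ‖)^2 := by positivity
    calc (1/2:ℝ)^(n+3) = (1/2:ℝ)^(n+1)/4 := by ring
      _ ≤ (1 - Complex.normSq a) / (‖1 - (starRingEnd ℂ) a * ζ‖)^2 :=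
          div_le_div₀ (le_of_lt hpos1) (le_of_lt hsq_pos) hpow2 h4
  · -- covering
    intro k w hw
    rw [Metric.mem_ball, Complex.dist_eq] at hw
    set D : ℂ := c + (starRingEnd ℂ) a * w with hD_def
    have hDrw : D = c * (1 - (starRingEnd ℂ) a * a) + (starRingEnd ℂ) a * (w - φ 0) := by
      rw [hφ0]; ring
    have habs_ca : ‖c * (1 - (starRingEnd ℂ) a * a)‖ = 1 - Complex.normSq a := by
      rw [norm_mul, hc1, one_mul, h1acomplex, Complex.norm_real, Real.norm_of_nonneg hpos1.le]
    have hD_lb : (1 - Complex.normSq a) - ‖w - φ 0‖ ≤ ‖D‖ := by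
      have h := norm_sub_norm_le (c * (1 - (starRingEnd ℂ) a * a))
        (-((starRingEnd ℂ) a * (w - φ 0)))
      rw [norm_neg, sub_neg_eq_add] at h
      rw [← hDrw, habs_ca] at h
      have hle : ‖(starRingEnd ℂ) a * (w - φ 0)‖ ≤ ‖w - φ 0‖ := by
        rw [norm_mul, Complex.norm_conj]
        nlinarith [norm_nonneg (w - φ 0), norm_nonneg a]
      linarith
    have hr_le : (1/2:ℝ)^(n+k+3) ≤ (1/2:ℝ)^(n+3) :=
      pow_le_pow_of_le_one (by norm_num) (by norm_num) (by omega)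
    have hD_lb2 : (1/2:ℝ)^(n+2) ≤ ‖D‖ := by
      have e1 : (1/2:ℝ)^(n+1) = (1/2:ℝ)^n * (1/2) := by ring
      have e2 : (1/2:ℝ)^(n+2) = (1/2:ℝ)^n * (1/4) := by ring
      have e3 : (1/2:ℝ)^(n+3) = (1/2:ℝ)^n * (1/8) := by ring
      have hx : (0:ℝ) ≤ (1/2:ℝ)^n := by positivity
      linarith
    have hD_ne : D ≠ 0 := by
      intro h
      rw [h, norm_zero] at hD_lb2
      have : (0:ℝ) < (1/2:ℝ)^(n+2) := by positivity
      linarith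
    refine ⟨(w - φ 0) / D, ?_, ?_⟩
    · rw [Metric.mem_ball, Complex.dist_eq, sub_zero, norm_div]
      have hstep : ‖w - φ 0‖ / ‖D‖
          < (1/2:ℝ)^(n+k+3) / (1/2:ℝ)^(n+2) := by
        gcongr
      have heq : (1/2:ℝ)^(n+k+3) / (1/2:ℝ)^(n+2) = (1/2:ℝ)^(k+1) := by
        rw [show (1/2:ℝ)^(n+k+3) = (1/2:ℝ)^(n+2) * (1/2:ℝ)^(k+1) by ring,
          mul_comm, mul_div_assoc, div_self (by positivity), mul_one]
      have hk : (1/2:ℝ)^(k+1) < (1/2:ℝ)^k := by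
        have e : (1/2:ℝ)^(k+1) = (1/2:ℝ)^k * (1/2) := by ring
        have : (0:ℝ) < (1/2:ℝ)^k := by positivity
        linarith
      calc ‖w - φ 0‖ / ‖D‖ < (1/2:ℝ)^(k+1) := heq ▸ hstep
        _ < (1/2:ℝ)^k := hk
    · -- φ ζ = w
      have hden2 : (1:ℂ) - (starRingEnd ℂ) a * ((w - φ 0) / D) =
          c * (1 - (starRingEnd ℂ) a * a) / D := by
        rw [hφ0]
        field_simp
        ring
      have hnum : (w - φ 0) / D - a = w * (1 - (starRingEnd ℂ) a * a) / D := by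
        rw [hφ0]
        field_simp
        ring
      rw [hφ, hden2, hnum]
      field_simp
end

section
/- Let φ be a holomorphic automorphism of the unit disk 𝔻 with 1 - (1/2)^n ≤ |φ(0)| < 1 - (1/2)^(n+1), and let 0 < r < 1. Then |φ(ζ)| ≥ 1 - (1/2)^n · (1 + 2r/(1-r)²) for all ζ with |ζ| ≤ r. -/
set_option maxHeartbeats 1000000


/-- If `φ` is a holomorphic automorphism of the unit disc with
`1 - (1/2)^n ≤ |φ(0)| < 1 - (1/2)^(n+1)` and `0 < r < 1`, then
`|φ(ζ)| ≥ 1 - (1/2)^n · (1 + 2r/(1-r)²)` for `|ζ| ≤ r`. -/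
theorem stmt_4 (a : ℂ) (ha : ‖a‖ < 1) (β : ℝ) (n : ℕ) (φ : ℂ → ℂ)
    (hφ : ∀ ζ : ℂ, φ ζ = Complex.exp (β * Complex.I) * ((ζ - a) / (1 - (starRingEnd ℂ) a * ζ)))
    (h1 : 1 - (1 / 2 : ℝ) ^ n ≤ ‖φ 0‖)
    (h2 : ‖φ 0‖ < 1 - (1 / 2 : ℝ) ^ (n + 1))
    (r : ℝ) (hr0 : 0 < r) (hr1 : r < 1) :
    ∀ ζ : ℂ, ‖ζ‖ ≤ r →
      1 - (1 / 2 : ℝ) ^ n * (1 + 2 * r / (1 - r) ^ 2) ≤ ‖φ ζ‖ := by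
  intro ζ hζ
  have hexp : ‖Complex.exp ((β : ℂ) * Complex.I)‖ = 1 := by
    simpa using Complex.norm_exp_ofReal_mul_I β
  have h0 : ‖φ 0‖ = ‖a‖ := by
    rw [hφ]
    simp [map_mul, hexp]
  set A := ‖a‖ with hAdef
  have hA1 : 1 - (1 / 2 : ℝ) ^ n ≤ A := h0 ▸ h1
  have hp : (0:ℝ) < (1/2:ℝ)^n := by positivity
  have hζ0 : (0:ℝ) ≤ ‖ζ‖ := norm_nonneg ζ
  have hA0 : (0:ℝ) ≤ A := norm_nonneg a
  -- denominator bound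
  have hwd : ‖(starRingEnd ℂ) a * ζ‖ ≤ r := by
    rw [norm_mul]
    have : ‖(starRingEnd ℂ) a‖ = A := Complex.norm_conj a
    rw [this]
    nlinarith
  have hd : (1:ℝ) - r ≤ ‖1 - (starRingEnd ℂ) a * ζ‖ := by
    have := norm_sub_norm_le (1 : ℂ) ((starRingEnd ℂ) a * ζ)
    simp only [norm_one] at this
    linarith
  have hdne : (1 - (starRingEnd ℂ) a * ζ) ≠ 0 := by
    intro h
    rw [h, norm_zero] at hd
    linarith
  -- difference formula
  have hdiff : φ ζ - φ 0 =
      Complex.exp ((β : ℂ) * Complex.I) *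
        (ζ * (1 - (starRingEnd ℂ) a * a) / (1 - (starRingEnd ℂ) a * ζ)) := by
    rw [hφ, hφ]
    have hdne' : 1 - ζ * (starRingEnd ℂ) a ≠ 0 := by rwa [mul_comm]
    field_simp [hdne']
    ring
  have hconj : (starRingEnd ℂ) a * a = ((A ^ 2 : ℝ) : ℂ) := by
    rw [← Complex.normSq_eq_conj_mul_self, Complex.normSq_eq_norm_sq]
  have habsnum : ‖1 - (starRingEnd ℂ) a * a‖ = 1 - A ^ 2 := by
    rw [hconj]
    have : ((1:ℂ) - ((A ^ 2 : ℝ) : ℂ)) = (((1 - A ^ 2 : ℝ)) : ℂ) := by push_cast; ring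
    rw [this, Complex.norm_real, Real.norm_eq_abs, abs_of_nonneg]
    nlinarith
  have hdiffabs : ‖φ ζ - φ 0‖ =
      ‖ζ‖ * (1 - A ^ 2) / ‖1 - (starRingEnd ℂ) a * ζ‖ := by
    rw [hdiff, norm_mul, hexp, one_mul, norm_div, norm_mul, habsnum]
  -- bound the difference
  have hdb : ‖φ ζ - φ 0‖ ≤ r * (1 - A ^ 2) / (1 - r) := by
    rw [hdiffabs]
    have h1r : (0:ℝ) < 1 - r := by linarith
    have hAsq : (0:ℝ) ≤ 1 - A ^ 2 := by nlinarith
    have hnum : ‖ζ‖ * (1 - A ^ 2) ≤ r * (1 - A ^ 2) := by nlinarith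
    exact div_le_div₀ (by nlinarith) hnum h1r hd
  -- triangle inequality
  have htri : A - ‖φ ζ - φ 0‖ ≤ ‖φ ζ‖ := by
    have h := norm_sub_norm_le (φ 0) (φ ζ)
    rw [norm_sub_rev] at h
    rw [h0] at h
    linarith
  -- final algebra
  have hfin : 1 - (1 / 2 : ℝ) ^ n * (1 + 2 * r / (1 - r) ^ 2) ≤
      A - r * (1 - A ^ 2) / (1 - r) := by
    set p := (1/2:ℝ)^n with hpdef
    have h1r : (0:ℝ) < 1 - r := by linarith
    have hA1' : A < 1 := ha
    have key1 : 1 - A ^ 2 ≤ 2 * p := by nlinarith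
    have key2 : r * (1 - A ^ 2) / (1 - r) ≤ 2 * p * r / (1 - r) := by
      apply div_le_div_of_nonneg_right ?_ h1r.le
      nlinarith
    have key3 : 2 * p * r / (1 - r) ≤ p * (2 * r / (1 - r) ^ 2) := by
      have hstep : 2 * p * r / (1 - r) ≤ 2 * p * r / (1 - r) ^ 2 :=
        div_le_div_of_nonneg_left (by positivity) (by positivity) (by nlinarith)
      calc 2 * p * r / (1 - r) ≤ 2 * p * r / (1 - r) ^ 2 := hstep
        _ = p * (2 * r / (1 - r) ^ 2) := by ring
    have hexpand : p * (1 + 2 * r / (1 - r) ^ 2) = p + p * (2 * r / (1 - r) ^ 2) := by ring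
    linarith
  linarith [hdb, htri, hfin]
end

section
/- For every r > 0 there exists a constant c > 0 such that the following holds for all n ∈ ℕ: if E is a subset of the annulus A_n = {ζ ∈ 𝔻 : 1 - (1/2)^n ≤ |ζ| < 1 - (1/2)^(n+1)} such that any two distinct points of E have Poincaré distance at least r, then E has at most c·2^n elements. -/
/-- The Poincaré distance on the unit disc. -/
noncomputable def poincareDist (z w : ℂ) : ℝ :=
  (1 / 2) * Real.log ((1 + ‖(z - w) / (1 - (starRingEnd ℂ) w * z)‖) /
    (1 - ‖(z - w) / (1 - (starRingEnd ℂ) w * z)‖))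

/-- The annulus `A_n = {ζ ∈ 𝔻 : 1-(1/2)^n ≤ |ζ| < 1-(1/2)^(n+1)}`. -/
def annA (n : ℕ) : Set ℂ :=
  {ζ : ℂ | 1 - (1 / 2 : ℝ) ^ n ≤ ‖ζ‖ ∧ ‖ζ‖ < 1 - (1 / 2 : ℝ) ^ (n + 1)}

open MeasureTheory

/-- Counting lemma: an `ε`-separated finite set, all of whose `ε/2`-balls lie in the
annulus `Rm ≤ |ζ| ≤ Rp`, has at most `(Rp² - Rm²)/(ε/2)²` elements. -/
lemma count_aux (ε Rm Rp : ℝ) (hε : 0 < ε) (hRm : 0 ≤ Rm) (hRR : Rm ≤ Rp) (F : Finset ℂ)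
    (hsep : ∀ e₁ ∈ F, ∀ e₂ ∈ F, e₁ ≠ e₂ → ε ≤ dist e₁ e₂)
    (hloc : ∀ e ∈ F, ∀ ζ : ℂ, dist ζ e < ε / 2 → Rm ≤ ‖ζ‖ ∧ ‖ζ‖ ≤ Rp) :
    (F.card : ℝ) * (ε / 2) ^ 2 ≤ Rp ^ 2 - Rm ^ 2 := by
  have hπ : (0 : ℝ) < Real.pi := Real.pi_pos
  -- the ε/2-balls around points of F are pairwise disjoint
  have hdisj : (F : Set ℂ).PairwiseDisjoint (fun e => Metric.ball e (ε / 2)) := by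
    intro a ha b hb hab
    refine Set.disjoint_left.mpr fun x hxa hxb => ?_
    rw [Metric.mem_ball] at hxa hxb
    have h1 := hsep a ha b hb hab
    have h2 : dist a b ≤ dist x a + dist x b := dist_triangle_left a b x
    linarith
  -- they lie in the closed annulus
  have hsub : (⋃ e ∈ F, Metric.ball e (ε / 2)) ⊆
      Metric.closedBall (0 : ℂ) Rp \ Metric.ball (0 : ℂ) Rm := by
    intro ζ hζ
    simp only [Set.mem_iUnion, Metric.mem_ball, exists_prop] at hζ
    obtain ⟨e, he, hde⟩ := hζ
    obtain ⟨h1, h2⟩ := hloc e he ζ hde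
    constructor
    · simpa [Complex.dist_eq] using h2
    · simp only [Metric.mem_ball, not_lt, Complex.dist_eq, sub_zero]
      simpa using h1
  -- measure computation
  have hUd : Disjoint (Metric.ball (0 : ℂ) Rm) (⋃ e ∈ F, Metric.ball e (ε / 2)) := by
    refine Set.disjoint_left.mpr fun x hx hx' => ?_
    exact absurd hx (hsub hx').2
  have hmeasU : volume (⋃ e ∈ F, Metric.ball e (ε / 2)) =
      F.card • (ENNReal.ofReal (ε / 2) ^ 2 * NNReal.pi) := by
    rw [measure_biUnion_finset hdisj (fun e _ => measurableSet_ball)]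
    simp [Complex.volume_ball]
  have hunion : volume (Metric.ball (0 : ℂ) Rm) + volume (⋃ e ∈ F, Metric.ball e (ε / 2)) ≤
      volume (Metric.closedBall (0 : ℂ) Rp) := by
    rw [← measure_union hUd (Finset.measurableSet_biUnion F (fun e _ => measurableSet_ball))]
    refine measure_mono (Set.union_subset ?_ fun x hx => (hsub hx).1)
    exact Metric.ball_subset_closedBall.trans (Metric.closedBall_subset_closedBall hRR)
  rw [hmeasU, Complex.volume_ball, Complex.volume_closedBall] at hunion
  -- convert to a real inequality
  have hofR : ∀ x : ℝ, 0 ≤ x → ENNReal.ofReal x ^ 2 * (NNReal.pi : ENNReal)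
      = ENNReal.ofReal (x ^ 2 * Real.pi) := by
    intro x hx
    rw [← ENNReal.ofReal_pow hx, ← @ENNReal.ofReal_coe_nnreal NNReal.pi,
      ← ENNReal.ofReal_mul (by positivity), NNReal.coe_real_pi]
  rw [hofR _ hRm, hofR _ (hRm.trans hRR), nsmul_eq_mul,
    hofR _ (by positivity : (0:ℝ) ≤ ε / 2), ← ENNReal.ofReal_natCast,
    ← ENNReal.ofReal_mul (by positivity), ← ENNReal.ofReal_add (by positivity) (by positivity)]
      at hunion
  have := (ENNReal.ofReal_le_ofReal_iff (by positivity)).mp hunion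
  nlinarith [sq_nonneg Rm]

/-- If two points of `annA n` are close enough (Euclidean), their Poincaré distance is small. -/
lemma poincare_small (δ : ℝ) (hδ0 : 0 < δ) (hδ1 : δ < 1) (n : ℕ) (z w : ℂ)
    (hz : z ∈ annA n) (hw : w ∈ annA n) (hd : dist z w < δ * (1 / 2) ^ (n + 1)) :
    poincareDist z w < (1 / 2) * Real.log ((1 + δ) / (1 - δ)) := by
  have ht : (0 : ℝ) < (1 / 2 : ℝ) ^ (n + 1) := by positivity
  have hz1 : ‖z‖ < 1 := lt_of_lt_of_le hz.2 (by linarith)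
  -- the denominator is at least (1/2)^(n+1)
  have hden : (1 / 2 : ℝ) ^ (n + 1) < ‖1 - (starRingEnd ℂ) w * z‖ := by
    have h1 : ‖(starRingEnd ℂ) w * z‖ = ‖w‖ * ‖z‖ := by
      simp [map_mul]
    have h2 : ‖1 - (starRingEnd ℂ) w * z‖ ≥
        ‖(1 : ℂ)‖ - ‖(starRingEnd ℂ) w * z‖ := by
      simpa using norm_sub_norm_le (1 : ℂ) ((starRingEnd ℂ) w * z)
    have h3 : ‖w‖ * ‖z‖ ≤ ‖w‖ * 1 :=
      mul_le_mul_of_nonneg_left hz1.le (norm_nonneg w)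
    simp only [norm_one] at h2
    rw [h1] at h2
    have h4 := hw.2
    linarith
  set ρ := ‖(z - w) / (1 - (starRingEnd ℂ) w * z)‖ with hρdef
  have hρ0 : 0 ≤ ρ := norm_nonneg _
  have hρδ : ρ < δ := by
    rw [hρdef, norm_div]
    rw [div_lt_iff₀ (ht.trans hden)]
    have hnum : ‖z - w‖ < δ * (1 / 2) ^ (n + 1) := by
      simpa [Complex.dist_eq] using hd
    calc ‖z - w‖ < δ * (1 / 2) ^ (n + 1) := hnum
      _ ≤ δ * ‖1 - (starRingEnd ℂ) w * z‖ :=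
        mul_le_mul_of_nonneg_left hden.le hδ0.le
  have hρ1 : ρ < 1 := hρδ.trans hδ1
  unfold poincareDist
  rw [← hρdef]
  have harg : (1 + ρ) / (1 - ρ) < (1 + δ) / (1 - δ) := by
    rw [div_lt_div_iff₀ (by linarith) (by linarith)]
    nlinarith
  have hpos : (0 : ℝ) < (1 + ρ) / (1 - ρ) := div_pos (by linarith) (by linarith)
  have := Real.log_lt_log hpos harg
  linarith

/-- The core cardinality bound for finite separated subsets of `annA n`. -/
lemma annulus_count (δ : ℝ) (hδ0 : 0 < δ) (hδ1 : δ < 1) (n : ℕ) (F : Finset ℂ)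
    (hFA : ∀ e ∈ F, e ∈ annA n)
    (hsep : ∀ e₁ ∈ F, ∀ e₂ ∈ F, e₁ ≠ e₂ → δ * (1 / 2) ^ (n + 1) ≤ dist e₁ e₂) :
    (F.card : ℝ) ≤ 32 / δ ^ 2 * 2 ^ n := by
  obtain ⟨ε, hεdef⟩ : ∃ x : ℝ, x = δ * (1 / 2) ^ (n + 1) := ⟨_, rfl⟩
  obtain ⟨Rm, hRmdef⟩ : ∃ x : ℝ, x = max (1 - (1 / 2 : ℝ) ^ n - ε / 2) 0 := ⟨_, rfl⟩
  obtain ⟨Rp, hRpdef⟩ : ∃ x : ℝ, x = 1 - (1 / 2 : ℝ) ^ (n + 1) + ε / 2 := ⟨_, rfl⟩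
  have htn : (0 : ℝ) < (1 / 2 : ℝ) ^ (n + 1) := by positivity
  have htn1 : (1 / 2 : ℝ) ^ n ≤ 1 := pow_le_one₀ (by norm_num) (by norm_num)
  have htn' : (1 / 2 : ℝ) ^ n = 2 * (1 / 2 : ℝ) ^ (n + 1) := by ring
  have hε0 : 0 < ε := by rw [hεdef]; positivity
  have hεsmall : ε ≤ (1 / 2 : ℝ) ^ (n + 1) := by rw [hεdef]; nlinarith
  have hRm0 : 0 ≤ Rm := hRmdef ▸ le_max_right _ _
  have hRm1 : 1 - (1 / 2 : ℝ) ^ n - ε / 2 ≤ Rm := hRmdef ▸ le_max_left _ _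
  have hRp0 : 0 < Rp := by rw [hRpdef]; linarith
  have hRR : Rm ≤ Rp := by
    rw [hRmdef, hRpdef]
    apply max_le <;> nlinarith
  have hcount := count_aux ε Rm Rp hε0 hRm0 hRR F
    (fun e₁ h₁ e₂ h₂ hne => hεdef ▸ hsep e₁ h₁ e₂ h₂ hne)
    (by
      intro e he ζ hζ
      have heA := hFA e he
      have heA1 : 1 - (1 / 2 : ℝ) ^ n ≤ ‖e‖ := heA.1
      have heA2 : ‖e‖ < 1 - (1 / 2 : ℝ) ^ (n + 1) := heA.2
      have hd2 : ‖ζ - e‖ < ε / 2 := by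
        simpa [Complex.dist_eq] using hζ
      have h3 : |‖ζ‖ - ‖e‖| ≤ ‖ζ - e‖ :=
        abs_norm_sub_norm_le ζ e
      obtain ⟨h3a, h3b⟩ := abs_le.mp h3
      constructor
      · rw [hRmdef]
        apply max_le
        · linarith
        · exact norm_nonneg ζ
      · rw [hRpdef]; linarith)
  -- area of the thickened annulus
  have hA : Rp ^ 2 - Rm ^ 2 ≤ 2 * (1 / 2 : ℝ) ^ n := by
    have h1 : Rp - Rm ≤ (1 / 2 : ℝ) ^ n := by rw [hRpdef]; nlinarith
    have h2 : Rp + Rm ≤ 2 := by rw [hRpdef] at hRR ⊢; nlinarith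
    have h4 : (Rp - Rm) * (Rp + Rm) ≤ (1 / 2 : ℝ) ^ n * 2 :=
      mul_le_mul h1 h2 (by linarith) (by positivity)
    nlinarith
  -- translate to the final bound
  have hu0 : (0 : ℝ) < (2 : ℝ) ^ n := by positivity
  have htval : (1 / 2 : ℝ) ^ (n + 1) = 1 / (2 * 2 ^ n) := by
    rw [div_pow, one_pow, pow_succ]
    ring
  have hsval : (1 / 2 : ℝ) ^ n = 1 / 2 ^ n := by rw [div_pow, one_pow]
  rw [hεdef, htval] at hcount
  rw [hsval] at hA
  have hfinal : (F.card : ℝ) * δ ^ 2 ≤ 32 * 2 ^ n := by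
    have h6 : (F.card : ℝ) * (δ * (1 / (2 * 2 ^ n)) / 2) ^ 2 * (16 * (2 ^ n) ^ 2) ≤
        (2 * (1 / 2 ^ n)) * (16 * (2 ^ n) ^ 2) := by
      apply mul_le_mul_of_nonneg_right (le_trans hcount hA) (by positivity)
    have hid : (δ * (1 / (2 * 2 ^ n)) / 2) ^ 2 * (16 * ((2:ℝ) ^ n) ^ 2) = δ ^ 2 := by
      field_simp
      ring
    have hid2 : (2 * (1 / (2:ℝ) ^ n)) * (16 * ((2:ℝ) ^ n) ^ 2) = 32 * 2 ^ n := by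
      field_simp
      ring
    calc (F.card : ℝ) * δ ^ 2
        = (F.card : ℝ) * ((δ * (1 / (2 * 2 ^ n)) / 2) ^ 2 * (16 * (2 ^ n) ^ 2)) := by
          rw [hid]
      _ = (F.card : ℝ) * (δ * (1 / (2 * 2 ^ n)) / 2) ^ 2 * (16 * (2 ^ n) ^ 2) := by ring
      _ ≤ (2 * (1 / 2 ^ n)) * (16 * (2 ^ n) ^ 2) := h6
      _ = 32 * 2 ^ n := hid2
  rw [div_mul_eq_mul_div, le_div_iff₀ (by positivity)]
  linarith

/-- For every `r > 0` there is `c > 0` such that for all `n`, any subset `E` of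
the annulus `A_n` whose distinct points have pairwise Poincaré distance at least `r` has at
most `c·2^n` elements. -/
theorem stmt_6 (r : ℝ) (hr : 0 < r) :
    ∃ c : ℝ, 0 < c ∧
      ∀ (n : ℕ) (E : Set ℂ), E ⊆ annA n →
        (∀ e₁ ∈ E, ∀ e₂ ∈ E, e₁ ≠ e₂ → r ≤ poincareDist e₁ e₂) →
        E.Finite ∧ (E.ncard : ℝ) ≤ c * 2 ^ n := by
  obtain ⟨X, hX⟩ : ∃ x : ℝ, x = Real.exp (2 * r) := ⟨_, rfl⟩
  have hX1 : 1 < X := by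
    rw [hX, ← Real.exp_zero]
    exact Real.exp_lt_exp.mpr (by linarith)
  obtain ⟨δ, hδ⟩ : ∃ x : ℝ, x = (X - 1) / (X + 1) := ⟨_, rfl⟩
  have hδ0 : 0 < δ := by rw [hδ]; apply div_pos <;> linarith
  have hδ1 : δ < 1 := by rw [hδ, div_lt_one (by linarith)]; linarith
  have hlog : (1 / 2) * Real.log ((1 + δ) / (1 - δ)) = r := by
    have h1 : (1 + δ) / (1 - δ) = X := by
      rw [hδ]; field_simp; ring
    rw [h1, hX, Real.log_exp]; ring
  refine ⟨32 / δ ^ 2, by positivity, fun n E hEA hEsep => ?_⟩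
  -- Euclidean separation
  have hsep : ∀ e₁ ∈ E, ∀ e₂ ∈ E, e₁ ≠ e₂ → δ * (1 / 2) ^ (n + 1) ≤ dist e₁ e₂ := by
    intro e₁ h₁ e₂ h₂ hne
    by_contra h
    push_neg at h
    have := poincare_small δ hδ0 hδ1 n e₁ e₂ (hEA h₁) (hEA h₂) h
    rw [hlog] at this
    exact absurd (hEsep e₁ h₁ e₂ h₂ hne) (not_le.mpr this)
  have key : ∀ F : Finset ℂ, ↑F ⊆ E → (F.card : ℝ) ≤ 32 / δ ^ 2 * 2 ^ n := fun F hFE =>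
    annulus_count δ hδ0 hδ1 n F (fun e he => hEA (hFE he))
      (fun e₁ h₁ e₂ h₂ hne => hsep e₁ (hFE h₁) e₂ (hFE h₂) hne)
  have hEfin : E.Finite := by
    by_contra hinf
    have hinf' : E.Infinite := hinf
    obtain ⟨t, htE, htfin, htcard⟩ :=
      hinf'.exists_subset_ncard_eq (⌈(32 / δ ^ 2 * 2 ^ n : ℝ)⌉₊ + 1)
    have hb := key htfin.toFinset (by simpa using htE)
    rw [Set.ncard_eq_toFinset_card _ htfin] at htcard
    rw [htcard] at hb
    have h1 : (32 / δ ^ 2 * 2 ^ n : ℝ) ≤ ⌈(32 / δ ^ 2 * 2 ^ n : ℝ)⌉₊ := Nat.le_ceil _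
    push_cast at hb
    linarith
  refine ⟨hEfin, ?_⟩
  have := key hEfin.toFinset (by simp)
  rwa [Set.ncard_eq_toFinset_card E hEfin]
end
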